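/- arXiv:1704.00478 — 4 statements merged into one kernel-verified Lean document; each statement's English description precedes it below -/
import Mathlib

section
/- For every positive integer n, the following identity of rational numbers holds: ∑_{d ∣ n} (n/d) · φ(gcd(d, n/d)) / gcd(d, n/d) = n · ∏_{p prime, p ∣ n} (1 + 1/p). (Both sides equal the Dedekind psi function ψ(n); the left-hand side is the sum of all cusp widths for Γ₀(n).) -/
open Finset

private def Fc (n : ℕ) : ℚ :=
  ∑ d ∈ n.divisors,
    ((n / d : ℕ) : ℚ) * (Nat.totient (Nat.gcd d (n / d)) : ℚ) / ((Nat.gcd d (n / d) : ℕ) : ℚ)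

private def Gc (n : ℕ) : ℚ := (n : ℚ) * ∏ p ∈ n.primeFactors, (1 + 1 / (p : ℚ))

private lemma gcd_pow_pow (p a b : ℕ) : Nat.gcd (p ^ a) (p ^ b) = p ^ min a b := by
  rcases le_total a b with h | h
  · rw [min_eq_left h, Nat.gcd_eq_left (pow_dvd_pow p h)]
  · rw [min_eq_right h, Nat.gcd_eq_right (pow_dvd_pow p h)]

private lemma Fc_mul {m n : ℕ} (hm : 0 < m) (hn : 0 < n) (h : Nat.Coprime m n) :
    Fc (m * n) = Fc m * Fc n := by
  unfold Fc
  simp only [Finset.sum_mul, Finset.mul_sum]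
  rw [← Finset.sum_product']
  have hcd : ∀ {x y : ℕ}, x ∣ m → y ∣ n → Nat.Coprime x y := fun hx hy =>
    Nat.Coprime.coprime_dvd_right hy (Nat.Coprime.coprime_dvd_left hx h)
  refine Finset.sum_nbij' (fun d => (Nat.gcd d n, Nat.gcd d m)) (fun p => p.2 * p.1)
    ?_ ?_ ?_ ?_ ?_
  · intro d hd
    simp only [Finset.mem_product, Nat.mem_divisors]
    exact ⟨⟨Nat.gcd_dvd_right _ _, hn.ne'⟩, ⟨Nat.gcd_dvd_right _ _, hm.ne'⟩⟩
  · rintro ⟨x, y⟩ hxy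
    simp only [Finset.mem_product, Nat.mem_divisors] at hxy
    exact Nat.mem_divisors.mpr ⟨mul_dvd_mul hxy.2.1 hxy.1.1, (Nat.mul_pos hm hn).ne'⟩
  · intro d hd
    simp only [Nat.mem_divisors] at hd
    simp only
    rw [← Nat.Coprime.gcd_mul _ h, Nat.gcd_eq_left hd.1]
  · rintro ⟨x, y⟩ hxy
    simp only [Finset.mem_product, Nat.mem_divisors] at hxy
    obtain ⟨⟨hx, _⟩, ⟨hy, _⟩⟩ := hxy
    have h1 : Nat.gcd (y * x) n = x := by
      rw [Nat.Coprime.gcd_mul_left_cancel x (Nat.Coprime.coprime_dvd_left hy h), Nat.gcd_eq_left hx]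
    have h2 : Nat.gcd (y * x) m = y := by
      rw [Nat.Coprime.gcd_mul_right_cancel y (Nat.Coprime.coprime_dvd_left hx h.symm), Nat.gcd_eq_left hy]
    simp [h1, h2]
  · intro d hd
    simp only [Nat.mem_divisors] at hd
    simp only
    have ha : Nat.gcd d m ∣ m := Nat.gcd_dvd_right _ _
    have hb : Nat.gcd d n ∣ n := Nat.gcd_dvd_right _ _
    set a := Nat.gcd d m with hadef
    set b := Nat.gcd d n with hbdef
    have hd' : d = a * b := by
      rw [hadef, hbdef, ← Nat.Coprime.gcd_mul _ h, Nat.gcd_eq_left hd.1]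
    have hma : m / a ∣ m := Nat.div_dvd_of_dvd ha
    have hnb : n / b ∣ n := Nat.div_dvd_of_dvd hb
    have hdiv : m * n / (a * b) = (m / a) * (n / b) := (Nat.div_mul_div_comm ha hb).symm
    have hcop1 : Nat.Coprime (m / a) (n / b) := hcd hma hnb
    have hbma : Nat.Coprime b (m / a) :=
      Nat.Coprime.coprime_dvd_right hma (Nat.Coprime.coprime_dvd_left hb h.symm)
    have hanb : Nat.Coprime a (n / b) := hcd ha hnb
    have hgcd : Nat.gcd (a * b) ((m / a) * (n / b))
        = Nat.gcd a (m / a) * Nat.gcd b (n / b) := by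
      rw [Nat.Coprime.gcd_mul _ hcop1, Nat.Coprime.gcd_mul_right_cancel a hbma,
        Nat.Coprime.gcd_mul_left_cancel b hanb]
    have hcopg : Nat.Coprime (Nat.gcd a (m / a)) (Nat.gcd b (n / b)) :=
      hcd ((Nat.gcd_dvd_left a (m / a)).trans ha) ((Nat.gcd_dvd_left b (n / b)).trans hb)
    rw [hd', hdiv, hgcd, Nat.totient_mul hcopg]
    push_cast
    simp only [div_eq_mul_inv, mul_inv]
    ring

private lemma Fc_prime_pow {p : ℕ} (hp : p.Prime) {k : ℕ} (hk : 0 < k) :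
    Fc (p ^ k) = (p : ℚ) ^ k + (p : ℚ) ^ (k - 1) := by
  obtain ⟨m, rfl⟩ : ∃ m, k = m + 1 := ⟨k - 1, (Nat.succ_pred_eq_of_pos hk).symm⟩
  have hp0 : (p : ℚ) ≠ 0 := Nat.cast_ne_zero.mpr hp.pos.ne'
  unfold Fc
  rw [Nat.sum_divisors_prime_pow hp]
  have hterm : ∀ x, x ≤ m + 1 →
      ((p ^ (m + 1) / p ^ x : ℕ) : ℚ) *
          (Nat.totient (Nat.gcd (p ^ x) (p ^ (m + 1) / p ^ x)) : ℚ) /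
          ((Nat.gcd (p ^ x) (p ^ (m + 1) / p ^ x) : ℕ) : ℚ)
      = (p : ℚ) ^ (m + 1 - x) *
          (Nat.totient (p ^ min x (m + 1 - x)) : ℚ) / ((p : ℚ) ^ min x (m + 1 - x)) := by
    intro x hx
    rw [Nat.pow_div hx hp.pos, gcd_pow_pow]
    push_cast
    ring
  rw [Finset.sum_range_succ', Finset.sum_range_succ]
  have h0 : ((p ^ (m + 1) / p ^ 0 : ℕ) : ℚ) *
      (Nat.totient (Nat.gcd (p ^ 0) (p ^ (m + 1) / p ^ 0)) : ℚ) /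
      ((Nat.gcd (p ^ 0) (p ^ (m + 1) / p ^ 0) : ℕ) : ℚ) = (p : ℚ) ^ (m + 1) := by
    rw [hterm 0 (Nat.zero_le _)]
    simp
  have hlast : ((p ^ (m + 1) / p ^ (m + 1) : ℕ) : ℚ) *
      (Nat.totient (Nat.gcd (p ^ (m + 1)) (p ^ (m + 1) / p ^ (m + 1))) : ℚ) /
      ((Nat.gcd (p ^ (m + 1)) (p ^ (m + 1) / p ^ (m + 1)) : ℕ) : ℚ) = 1 := by
    rw [hterm (m + 1) le_rfl]
    simp
  have hmid : ∀ i ∈ Finset.range m,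
      ((p ^ (m + 1) / p ^ (i + 1) : ℕ) : ℚ) *
          (Nat.totient (Nat.gcd (p ^ (i + 1)) (p ^ (m + 1) / p ^ (i + 1))) : ℚ) /
          ((Nat.gcd (p ^ (i + 1)) (p ^ (m + 1) / p ^ (i + 1)) : ℕ) : ℚ)
      = (p : ℚ) ^ (m - i) - (p : ℚ) ^ (m - (i + 1)) := by
    intro i hi
    rw [Finset.mem_range] at hi
    rw [hterm (i + 1) (by omega)]
    set e := min (i + 1) (m + 1 - (i + 1)) with he
    have he1 : 0 < e := by omega
    have hexp : m + 1 - (i + 1) = m - i := by omega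
    have htot : (Nat.totient (p ^ e) : ℚ) = (p : ℚ) ^ (e - 1) * ((p : ℚ) - 1) := by
      rw [Nat.totient_prime_pow hp he1]
      push_cast [Nat.cast_sub hp.one_le]
      ring
    have hpe : (p : ℚ) ^ e = (p : ℚ) ^ (e - 1) * p := by
      conv_lhs => rw [show e = (e - 1) + 1 by omega]
      ring
    have h2 : m - i = (m - (i + 1)) + 1 := by omega
    rw [hexp, htot, hpe, h2, pow_succ]
    have hpe0 : (p : ℚ) ^ (e - 1) ≠ 0 := pow_ne_zero _ hp0
    field_simp
  rw [Finset.sum_congr rfl hmid, h0, hlast]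
  have tele : ∑ i ∈ Finset.range m, ((p : ℚ) ^ (m - i) - (p : ℚ) ^ (m - (i + 1)))
      = (p : ℚ) ^ m - 1 := by
    have := Finset.sum_range_sub' (fun i => (p : ℚ) ^ (m - i)) m
    rw [this, Nat.sub_zero, Nat.sub_self, pow_zero]
  rw [tele]
  simp only [Nat.add_sub_cancel]
  ring

private lemma Gc_mul {m n : ℕ} (hm : 0 < m) (hn : 0 < n) (h : Nat.Coprime m n) :
    Gc (m * n) = Gc m * Gc n := by
  have := hm; have := hn
  unfold Gc
  rw [Nat.Coprime.primeFactors_mul h, Finset.prod_union h.disjoint_primeFactors]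
  push_cast
  ring

private lemma Gc_prime_pow {p : ℕ} (hp : p.Prime) {k : ℕ} (hk : 0 < k) :
    Gc (p ^ k) = (p : ℚ) ^ k + (p : ℚ) ^ (k - 1) := by
  have hp0 : (p : ℚ) ≠ 0 := Nat.cast_ne_zero.mpr hp.pos.ne'
  unfold Gc
  rw [Nat.primeFactors_prime_pow hk.ne' hp, Finset.prod_singleton]
  have hpk : (p : ℚ) ^ k = (p : ℚ) ^ (k - 1) * p := by
    conv_lhs => rw [show k = (k - 1) + 1 by omega]
    ring
  push_cast
  rw [hpk]
  field_simp

private lemma Fc_eq_Gc : ∀ n : ℕ, 0 < n → Fc n = Gc n := by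
  intro n
  induction n using Nat.recOnPosPrimePosCoprime with
  | prime_pow p k hp hk => intro _; rw [Fc_prime_pow hp hk, Gc_prime_pow hp hk]
  | zero => intro h; omega
  | one => intro _; simp [Fc, Gc]
  | coprime a b ha hb hab iha ihb =>
    intro _
    rw [Fc_mul (by omega) (by omega) hab, Gc_mul (by omega) (by omega) hab,
      iha (by omega), ihb (by omega)]

/-- For every positive integer `n`,
`∑_{d ∣ n} (n/d) · φ(gcd(d, n/d)) / gcd(d, n/d) = n · ∏_{p prime, p ∣ n} (1 + 1/p)`,
both sides being the Dedekind psi function `ψ(n)`. -/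
theorem sum_cusp_widths_eq_dedekind_psi (n : ℕ) (hn : 0 < n) :
    ∑ d ∈ n.divisors,
      ((n / d : ℕ) : ℚ) * (Nat.totient (Nat.gcd d (n / d)) : ℚ) / ((Nat.gcd d (n / d) : ℕ) : ℚ)
      = (n : ℚ) * ∏ p ∈ n.primeFactors, (1 + 1 / (p : ℚ)) := by
  exact Fc_eq_Gc n hn
end

section
/- For every positive integer n, the index of the congruence subgroup Γ₀(n) in SL(2,ℤ) equals the Dedekind psi function ψ(n) = n · ∏_{p prime, p ∣ n} (1 + 1/p). -/
open Matrix CongruenceSubgroup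

open scoped MatrixGroups

namespace Gamma0IndexAux

/-- Unimodular pairs in `ZMod n`. -/
def Unimod (n : ℕ) : Type := {v : ZMod n × ZMod n // ∃ x y, v.1 * x + v.2 * y = 1}

instance (n : ℕ) [NeZero n] : Fintype (Unimod n) := by
  unfold Unimod; infer_instance

/-- Scaling relation by units. -/
def rel (n : ℕ) : Setoid (Unimod n) where
  r p q := ∃ u : (ZMod n)ˣ, q.1.1 = u * p.1.1 ∧ q.1.2 = u * p.1.2
  iseqv := by
    constructor
    · exact fun p => ⟨1, by simp⟩
    · rintro p q ⟨u, h1, h2⟩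
      exact ⟨u⁻¹, by rw [h1, h2]; constructor <;> simp⟩
    · rintro p q r ⟨u, h1, h2⟩ ⟨v, h3, h4⟩
      exact ⟨v * u, by simp [h3, h1, h4, h2, mul_assoc]⟩

/-- The map sending a matrix to its first column mod n. -/
def toU (n : ℕ) (A : SL(2, ℤ)) : Unimod n :=
  ⟨((A 0 0 : ZMod n), (A 1 0 : ZMod n)), (A 1 1 : ZMod n), -(A 0 1 : ZMod n), by
    have h : ((A : Matrix (Fin 2) (Fin 2) ℤ).det : ℤ) = 1 := A.2
    rw [Matrix.det_fin_two] at h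
    have := congrArg (fun z : ℤ => (z : ZMod n)) h
    push_cast at this
    rw [← this]; ring⟩

lemma coset_iff (n : ℕ) (A B : SL(2, ℤ)) :
    (rel n) (toU n A) (toU n B) ↔ A⁻¹ * B ∈ Gamma0 n := by
  constructor
  · rintro ⟨u, h1, h2⟩
    rw [Gamma0_mem]
    have hinv := Matrix.SpecialLinearGroup.SL2_inv_expl A
    have hmul := (Matrix.two_mul_expl (A⁻¹ : SL(2,ℤ)).1 B.1).2.2.1
    have e10 : ((A⁻¹ : SL(2,ℤ)) 1 0 : ℤ) = -(A 1 0) := by rw [hinv]; rfl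
    have e11 : ((A⁻¹ : SL(2,ℤ)) 1 1 : ℤ) = A 0 0 := by rw [hinv]; rfl
    have : ((A⁻¹ * B) 1 0 : ℤ) = -(A 1 0) * B 0 0 + A 0 0 * B 1 0 := by
      rw [Matrix.SpecialLinearGroup.coe_mul] at *
      rw [hmul, e10, e11]
    have := congrArg (fun z : ℤ => (z : ZMod n)) this
    simp only [Int.cast_add, Int.cast_mul, Int.cast_neg] at this
    rw [this]
    simp only [toU] at h1 h2
    rw [h1, h2]
    ring
  · intro hγ
    set γ := A⁻¹ * B with hγdef
    have hB : B = A * γ := by rw [hγdef]; group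
    have hdet : ((γ : Matrix (Fin 2) (Fin 2) ℤ).det : ℤ) = 1 := γ.2
    rw [Matrix.det_fin_two] at hdet
    have h10 : ((γ 1 0 : ℤ) : ZMod n) = 0 := Gamma0_mem.mp hγ
    have hu : ((γ 0 0 : ℤ) : ZMod n) * ((γ 1 1 : ℤ) : ZMod n) = 1 := by
      have := congrArg (fun z : ℤ => (z : ZMod n)) hdet
      push_cast at this
      rw [h10] at this
      simpa using this
    refine ⟨⟨((γ 0 0 : ℤ) : ZMod n), ((γ 1 1 : ℤ) : ZMod n), hu, by rw [mul_comm] at hu; exact hu⟩, ?_, ?_⟩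
    · have hmul := (Matrix.two_mul_expl A.1 γ.1).1
      have : (B 0 0 : ℤ) = A 0 0 * γ 0 0 + A 0 1 * γ 1 0 := by
        rw [hB]; rw [Matrix.SpecialLinearGroup.coe_mul] at *; exact hmul
      have := congrArg (fun z : ℤ => (z : ZMod n)) this
      push_cast at this
      simp only [toU]
      rw [this, h10]
      ring_nf
    · have hmul := (Matrix.two_mul_expl A.1 γ.1).2.2.1
      have : (B 1 0 : ℤ) = A 1 0 * γ 0 0 + A 1 1 * γ 1 0 := by
        rw [hB]; rw [Matrix.SpecialLinearGroup.coe_mul] at *; exact hmul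
      have := congrArg (fun z : ℤ => (z : ZMod n)) this
      push_cast at this
      simp only [toU]
      rw [this, h10]
      ring_nf

lemma triple_lemma (n : ℕ) [NeZero n] {a c : ZMod n} (h : ∃ x y, a * x + c * y = 1)
    {q : ℕ} (hq : q.Prime) (ha : q ∣ a.val) (hc : q ∣ c.val) : ¬ q ∣ n := by
  intro hqn
  haveI : Fact q.Prime := ⟨hq⟩
  obtain ⟨x, y, hxy⟩ := h
  have key := congrArg (ZMod.castHom hqn (ZMod q)) hxy
  have ha' : (ZMod.castHom hqn (ZMod q)) a = 0 := by
    rw [ZMod.castHom_apply, ← ZMod.natCast_val a]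
    exact (ZMod.natCast_eq_zero_iff _ _).mpr ha
  have hc' : (ZMod.castHom hqn (ZMod q)) c = 0 := by
    rw [ZMod.castHom_apply, ← ZMod.natCast_val c]
    exact (ZMod.natCast_eq_zero_iff _ _).mpr hc
  rw [map_add, _root_.map_mul, _root_.map_mul, _root_.map_one, ha', hc'] at key
  simp at key

lemma exists_SL2_toU (n : ℕ) [NeZero n] (p : Unimod n) : ∃ A : SL(2, ℤ), toU n A = p := by
  obtain ⟨⟨a, c⟩, hp⟩ := p
  set a₀ : ℕ := if a.val = 0 then n else a.val with ha₀
  set c₀ : ℕ := if c.val = 0 then n else c.val with hc₀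
  have ha₀0 : a₀ ≠ 0 := by
    rcases eq_or_ne a.val 0 with h | h <;> simp [ha₀, h, NeZero.ne n]
  have hc₀0 : c₀ ≠ 0 := by
    rcases eq_or_ne c.val 0 with h | h <;> simp [hc₀, h, NeZero.ne n]
  have hdva : ∀ q : ℕ, q ∣ a₀ → q ∣ n → q ∣ a.val := by
    intro q h1 h2
    rcases eq_or_ne a.val 0 with h | h
    · simp [h]
    · rwa [ha₀, if_neg h] at h1
  have hdvc : ∀ q : ℕ, q ∣ c₀ → q ∣ n → q ∣ c.val := by
    intro q h1 h2
    rcases eq_or_ne c.val 0 with h | h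
    · simp [h]
    · rwa [hc₀, if_neg h] at h1
  set t : ℕ := ∏ r ∈ a₀.primeFactors \ c₀.primeFactors, r with ht
  set c' : ℕ := c₀ + n * t with hc'
  have hcop : Nat.Coprime a₀ c' := by
    by_contra hg
    set q : ℕ := (Nat.gcd a₀ c').minFac with hqdef
    have hq : q.Prime := Nat.minFac_prime hg
    have hqa : q ∣ a₀ := (Nat.minFac_dvd _).trans (Nat.gcd_dvd_left _ _)
    have hqc' : q ∣ c' := (Nat.minFac_dvd _).trans (Nat.gcd_dvd_right _ _)
    by_cases hqc₀ : q ∣ c₀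
    · -- q divides a₀ and c₀, so q does not divide n; deduce q ∣ t, contradiction
      have hqn : ¬ q ∣ n := by
        intro hqn
        exact triple_lemma n hp hq (hdva q hqa hqn) (hdvc q hqc₀ hqn) hqn
      have hqnt : q ∣ n * t := by
        have h2 : c' - c₀ = n * t := by omega
        rw [← h2]
        exact Nat.dvd_sub hqc' hqc₀
      have hqt : q ∣ t := ((Nat.Prime.dvd_mul hq).mp hqnt).resolve_left hqn
      obtain ⟨r, hrmem, hqr⟩ := (Prime.dvd_finset_prod_iff hq.prime _).mp hqt
      simp only [Finset.mem_sdiff, Nat.mem_primeFactors] at hrmem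
      have : q = r := ((Nat.prime_dvd_prime_iff_eq hq hrmem.1.1).mp hqr)
      subst this
      exact hrmem.2 ⟨hq, hqc₀, hc₀0⟩
    · -- q does not divide c₀, so q ∣ t hence q ∣ c₀, contradiction
      have hqmem : q ∈ a₀.primeFactors \ c₀.primeFactors := by
        simp only [Finset.mem_sdiff, Nat.mem_primeFactors]
        exact ⟨⟨hq, hqa, ha₀0⟩, fun h => hqc₀ h.2.1⟩
      have hqt : q ∣ t := Finset.dvd_prod_of_mem _ hqmem
      have : q ∣ c₀ := by
        have : q ∣ n * t := Dvd.dvd.mul_left hqt n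
        have h2 : c₀ = c' - n * t := by omega
        rw [h2]
        exact Nat.dvd_sub hqc' this
      exact hqc₀ this
  have ha_val : ((a.val : ℕ) : ZMod n) = a := by
    rw [ZMod.natCast_val, ZMod.cast_id]
  have hc_val : ((c.val : ℕ) : ZMod n) = c := by
    rw [ZMod.natCast_val, ZMod.cast_id]
  have hacast : ((a₀ : ℕ) : ZMod n) = a := by
    rcases eq_or_ne a.val 0 with h | h
    · rw [ha₀, if_pos h, ZMod.natCast_self, ← ha_val, h, Nat.cast_zero]
    · rw [ha₀, if_neg h, ha_val]
  have hccast : ((c' : ℕ) : ZMod n) = c := by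
    have h1 : ((c₀ : ℕ) : ZMod n) = c := by
      rcases eq_or_ne c.val 0 with h | h
      · rw [hc₀, if_pos h, ZMod.natCast_self, ← hc_val, h, Nat.cast_zero]
      · rw [hc₀, if_neg h, hc_val]
    rw [hc', Nat.cast_add, Nat.cast_mul, ZMod.natCast_self, zero_mul, add_zero, h1]
  obtain ⟨x, y, hxy⟩ := Nat.isCoprime_iff_coprime.mpr hcop
  have hdet : (!![(a₀ : ℤ), -y; (c' : ℤ), x]).det = 1 := by
    rw [Matrix.det_fin_two_of]
    linarith [hxy]
  set A : SL(2, ℤ) := ⟨!![(a₀ : ℤ), -y; (c' : ℤ), x], hdet⟩ with hA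
  have e00 : (A 0 0 : ℤ) = (a₀ : ℤ) := rfl
  have e10 : (A 1 0 : ℤ) = (c' : ℤ) := rfl
  refine ⟨A, ?_⟩
  apply Subtype.ext
  simp only [toU, e00, e10]
  ext
  · show ((a₀ : ℤ) : ZMod n) = a
    push_cast
    exact hacast
  · show ((c' : ℤ) : ZMod n) = c
    push_cast
    exact hccast

noncomputable def qmap (n : ℕ) : (SL(2, ℤ) ⧸ Gamma0 n) → Quotient (rel n) :=
  Quotient.lift (fun A => Quotient.mk (rel n) (toU n A))
    (fun A B h => Quotient.sound ((coset_iff n A B).mpr (QuotientGroup.leftRel_apply.mp h)))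

noncomputable def quotEquiv (n : ℕ) [NeZero n] : (SL(2, ℤ) ⧸ Gamma0 n) ≃ Quotient (rel n) := by
  refine Equiv.ofBijective (qmap n) ⟨?_, ?_⟩
  · intro x y
    induction x using Quotient.ind
    induction y using Quotient.ind
    intro h
    exact Quotient.sound (QuotientGroup.leftRel_apply.mpr ((coset_iff n _ _).mp (Quotient.exact h)))
  · intro q
    induction q using Quotient.ind with
    | _ p =>
      obtain ⟨A, hA⟩ := exists_SL2_toU n p
      exact ⟨QuotientGroup.mk A, by simp [qmap, hA]⟩

/-- Scaling a unimodular pair by a unit. -/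
def act (n : ℕ) (u : (ZMod n)ˣ) (p : Unimod n) : Unimod n :=
  ⟨((u : ZMod n) * p.1.1, (u : ZMod n) * p.1.2), by
    obtain ⟨x, y, hxy⟩ := p.2
    refine ⟨(u⁻¹ : (ZMod n)ˣ) * x, (u⁻¹ : (ZMod n)ˣ) * y, ?_⟩
    have hu : (u : ZMod n) * (u⁻¹ : (ZMod n)ˣ) = 1 := by
      rw [← Units.val_mul, mul_inv_cancel, Units.val_one]
    calc (u : ZMod n) * p.1.1 * ((u⁻¹ : (ZMod n)ˣ) * x) + (u : ZMod n) * p.1.2 * ((u⁻¹ : (ZMod n)ˣ) * y)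
        = ((u : ZMod n) * (u⁻¹ : (ZMod n)ˣ)) * (p.1.1 * x + p.1.2 * y) := by ring
      _ = 1 := by rw [hu, hxy, one_mul]⟩

lemma act_free (n : ℕ) {u u' : (ZMod n)ˣ} {p : Unimod n} (h : act n u p = act n u' p) : u = u' := by
  obtain ⟨x, y, hxy⟩ := p.2
  have h1 : (u : ZMod n) * p.1.1 = (u' : ZMod n) * p.1.1 := congrArg (fun q => q.1.1) h
  have h2 : (u : ZMod n) * p.1.2 = (u' : ZMod n) * p.1.2 := congrArg (fun q => q.1.2) h
  apply Units.ext
  calc (u : ZMod n) = (u : ZMod n) * (p.1.1 * x + p.1.2 * y) := by rw [hxy, mul_one]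
    _ = ((u : ZMod n) * p.1.1) * x + ((u : ZMod n) * p.1.2) * y := by ring
    _ = ((u' : ZMod n) * p.1.1) * x + ((u' : ZMod n) * p.1.2) * y := by rw [h1, h2]
    _ = (u' : ZMod n) * (p.1.1 * x + p.1.2 * y) := by ring
    _ = (u' : ZMod n) := by rw [hxy, mul_one]

lemma act_rel (n : ℕ) (u : (ZMod n)ˣ) (p : Unimod n) : (rel n) p (act n u p) :=
  ⟨u, rfl, rfl⟩

noncomputable def orbitEquiv (n : ℕ) : Quotient (rel n) × (ZMod n)ˣ ≃ Unimod n := by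
  letI : Setoid (Unimod n) := rel n
  refine Equiv.ofBijective (fun qu => act n qu.2 qu.1.out) ⟨?_, ?_⟩
  · rintro ⟨q, u⟩ ⟨q', u'⟩ h
    simp only at h
    have hrel : (rel n) q.out q'.out := by
      exact Setoid.trans (act_rel n u q.out) (h ▸ Setoid.symm (act_rel n u' q'.out))
    have hq : q = q' := (@Quotient.out_equiv_out _ (rel n) _ _).mp hrel
    subst hq
    have : u = u' := act_free n h
    rw [this]
  · intro p
    have hrel : (rel n) (Quotient.mk (rel n) p).out p := Quotient.exact (Quotient.out_eq _)
    obtain ⟨u, h1, h2⟩ := hrel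
    refine ⟨(Quotient.mk (rel n) p, u), ?_⟩
    simp only [act]
    apply Subtype.ext
    exact Prod.ext h1.symm h2.symm

lemma unimod_iff_pp {p k : ℕ} (hp : p.Prime) (hk : 0 < k) (v : ZMod (p ^ k) × ZMod (p ^ k)) :
    (∃ x y, v.1 * x + v.2 * y = 1) ↔ (IsUnit v.1 ∨ IsUnit v.2) := by
  haveI : Fact p.Prime := ⟨hp⟩
  haveI : NeZero (p ^ k) := ⟨pow_ne_zero _ hp.pos.ne'⟩
  constructor
  · intro h
    by_contra hc
    push_neg at hc
    have hval : ∀ z : ZMod (p ^ k), ¬ IsUnit z → p ∣ z.val := by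
      intro z hz
      by_contra hdvd
      have h1 : z.val.Coprime p := ((Nat.Prime.coprime_iff_not_dvd hp).mpr hdvd).symm
      have h2 : z.val.Coprime (p ^ k) := Nat.Coprime.pow_right _ h1
      have := (ZMod.isUnit_iff_coprime z.val (p ^ k)).mpr h2
      rw [ZMod.natCast_val, ZMod.cast_id] at this
      exact hz this
    exact triple_lemma (p ^ k) h hp (hval _ hc.1) (hval _ hc.2)
      (dvd_pow_self p hk.ne')
  · rintro (h | h)
    · obtain ⟨u, hu⟩ := h
      exact ⟨(u⁻¹ : _ˣ), 0, by rw [← hu, mul_zero, add_zero, ← Units.val_mul, mul_inv_cancel,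
        Units.val_one]⟩
    · obtain ⟨u, hu⟩ := h
      exact ⟨0, (u⁻¹ : _ˣ), by rw [← hu, mul_zero, zero_add, ← Units.val_mul, mul_inv_cancel,
        Units.val_one]⟩

/-- Units of a monoid are equivalent to the subtype of elements that are units. -/
noncomputable def unitsEquiv (α : Type*) [Monoid α] : αˣ ≃ {x : α // IsUnit x} where
  toFun u := ⟨u, u.isUnit⟩
  invFun x := x.2.unit
  left_inv u := Units.ext (IsUnit.unit_spec _)
  right_inv x := Subtype.ext (x.2.unit_spec)

lemma card_nonunits (m : ℕ) [NeZero m] :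
    Fintype.card {x : ZMod m // ¬ IsUnit x} = m - m.totient := by
  classical
  rw [Fintype.card_subtype_compl, ZMod.card]
  congr 1
  rw [← ZMod.card_units_eq_totient m]
  exact (Fintype.card_congr (unitsEquiv (ZMod m))).symm

lemma card_unimod_pp {p k : ℕ} (hp : p.Prime) (hk : 0 < k) :
    Nat.card (Unimod (p ^ k)) = p ^ (2 * k) - (p ^ (k - 1)) ^ 2 := by
  classical
  haveI : NeZero (p ^ k) := ⟨pow_ne_zero _ hp.pos.ne'⟩
  have h1 : Nat.card (Unimod (p ^ k)) =
      Fintype.card {v : ZMod (p ^ k) × ZMod (p ^ k) // IsUnit v.1 ∨ IsUnit v.2} := by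
    rw [Nat.card_eq_fintype_card]
    exact Fintype.card_congr (Equiv.subtypeEquivRight (unimod_iff_pp hp hk))
  have h2 : Fintype.card {v : ZMod (p ^ k) × ZMod (p ^ k) // ¬ (IsUnit v.1 ∨ IsUnit v.2)} =
      (p ^ (k - 1)) ^ 2 := by
    have e1 : {v : ZMod (p ^ k) × ZMod (p ^ k) // ¬ (IsUnit v.1 ∨ IsUnit v.2)} ≃
        {x : ZMod (p ^ k) // ¬ IsUnit x} × {x : ZMod (p ^ k) // ¬ IsUnit x} :=
      (Equiv.subtypeEquivRight (fun v => by push_neg; rfl)).trans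
        (Equiv.subtypeProdEquivProd)
    rw [Fintype.card_congr e1, Fintype.card_prod, card_nonunits, sq]
    have htot : (p ^ k).totient = p ^ (k - 1) * (p - 1) := Nat.totient_prime_pow hp hk
    have hpk : p ^ k = p ^ (k - 1) * p := by
      rw [← pow_succ]
      congr 1
      omega
    have hple : 1 ≤ p := hp.pos
    have : p ^ k - (p ^ k).totient = p ^ (k - 1) := by
      rw [htot, hpk, ← Nat.mul_sub]
      have : p - (p - 1) = 1 := by omega
      rw [this, mul_one]
    rw [this]
  have h3 : Fintype.card {v : ZMod (p ^ k) × ZMod (p ^ k) // IsUnit v.1 ∨ IsUnit v.2} =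
      Fintype.card (ZMod (p ^ k) × ZMod (p ^ k)) -
        Fintype.card {v : ZMod (p ^ k) × ZMod (p ^ k) // ¬ (IsUnit v.1 ∨ IsUnit v.2)} := by
    rw [← Fintype.card_subtype_compl]
    exact Fintype.card_congr (Equiv.subtypeEquivRight (fun v => (not_not).symm))
  rw [h1, h3, h2, Fintype.card_prod, ZMod.card]
  congr 1
  rw [← pow_add]
  congr 1
  omega

noncomputable def crtEquiv (a b : ℕ) (h : a.Coprime b) : Unimod (a * b) ≃ Unimod a × Unimod b := by
  set e := ZMod.chineseRemainder h with he
  refine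
  { toFun := fun v =>
      (⟨((e v.1.1).1, (e v.1.2).1), ?_⟩, ⟨((e v.1.1).2, (e v.1.2).2), ?_⟩)
    invFun := fun st =>
      ⟨(e.symm (st.1.1.1, st.2.1.1), e.symm (st.1.1.2, st.2.1.2)), ?_⟩
    left_inv := ?_
    right_inv := ?_ }
  · obtain ⟨x, y, hxy⟩ := v.2
    refine ⟨(e x).1, (e y).1, ?_⟩
    have := congrArg (fun z => (e z).1) hxy
    simpa using this
  · obtain ⟨x, y, hxy⟩ := v.2
    refine ⟨(e x).2, (e y).2, ?_⟩
    have := congrArg (fun z => (e z).2) hxy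
    simpa using this
  · obtain ⟨xs, ys, hs⟩ := st.1.2
    obtain ⟨xt, yt, ht⟩ := st.2.2
    refine ⟨e.symm (xs, xt), e.symm (ys, yt), ?_⟩
    have : ((st.1.1.1, st.2.1.1) : ZMod a × ZMod b) * (xs, xt) +
        ((st.1.1.2, st.2.1.2) : ZMod a × ZMod b) * (ys, yt) = 1 := by
      rw [Prod.mk_mul_mk, Prod.mk_mul_mk, Prod.mk_add_mk, hs, ht]
      rfl
    calc e.symm (st.1.1.1, st.2.1.1) * e.symm (xs, xt) +
          e.symm (st.1.1.2, st.2.1.2) * e.symm (ys, yt)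
        = e.symm (((st.1.1.1, st.2.1.1) : ZMod a × ZMod b) * (xs, xt) +
            ((st.1.1.2, st.2.1.2) : ZMod a × ZMod b) * (ys, yt)) := by
          rw [map_add, _root_.map_mul, _root_.map_mul]
      _ = 1 := by rw [this, _root_.map_one]
  · intro v
    apply Subtype.ext
    ext
    · simp
    · simp
  · intro st
    apply Prod.ext <;> apply Subtype.ext <;> ext <;> simp

lemma card_unimod_mul (a b : ℕ) (h : a.Coprime b) :
    Nat.card (Unimod (a * b)) = Nat.card (Unimod a) * Nat.card (Unimod b) := by
  rw [Nat.card_congr (crtEquiv a b h), Nat.card_prod]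

instance : Infinite (Unimod 0) := by
  apply Infinite.of_injective (fun k : ℤ => (⟨((1 : ZMod 0), (k : ZMod 0)), 1, 0, by
    simp; exact Int.mul_zero k⟩ : Unimod 0))
  intro k l hkl
  have := congrArg (fun p : Unimod 0 => p.1.2) hkl
  simp at this; exact this

lemma card_unimod (n : ℕ) :
    (Nat.card (Unimod n) : ℚ) = (n : ℚ) ^ 2 * ∏ p ∈ n.primeFactors, (1 - 1 / (p : ℚ) ^ 2) := by
  induction n using Nat.recOnPosPrimePosCoprime with
  | prime_pow p k hp hk =>
    have hpp : p.Prime := hp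
    rw [card_unimod_pp hpp hk, Nat.primeFactors_prime_pow hk.ne' hp, Finset.prod_singleton]
    have hle : (p ^ (k - 1)) ^ 2 ≤ p ^ (2 * k) := by
      rw [← pow_mul]
      exact Nat.pow_le_pow_right hpp.pos (by omega)
    rw [Nat.cast_sub hle]
    push_cast
    have hp0 : (p : ℚ) ≠ 0 := Nat.cast_ne_zero.mpr hpp.pos.ne'
    have h2k : (p : ℚ) ^ (2 * k) = ((p : ℚ) ^ k) ^ 2 := by rw [pow_mul']
    have hk1 : (p : ℚ) ^ k = (p : ℚ) ^ (k - 1) * p := by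
      rw [← pow_succ]
      congr 1
      omega
    rw [h2k, hk1]
    field_simp
  | zero =>
    rw [Nat.card_eq_zero_of_infinite]
    simp
  | one =>
    have : Nat.card (Unimod 1) = 1 := by
      rw [Nat.card_eq_one_iff_unique]
      constructor
      · constructor
        intro p q
        apply Subtype.ext
        apply Subsingleton.elim
      · exact ⟨⟨(0, 0), 0, 0, Subsingleton.elim _ _⟩⟩
    rw [this]
    simp
  | coprime a b ha hb hab iha ihb =>
    rw [card_unimod_mul a b hab, Nat.cast_mul, iha, ihb,
      Nat.Coprime.primeFactors_mul hab, Finset.prod_union (Nat.Coprime.disjoint_primeFactors hab)]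
    push_cast
    ring

end Gamma0IndexAux

open Gamma0IndexAux

/-- The index of the congruence subgroup `Γ₀(n)` in `SL(2, ℤ)` equals the Dedekind psi
function `ψ(n) = n · ∏_{p prime, p ∣ n} (1 + 1/p)`. -/
theorem Gamma0_index_eq_dedekind_psi (n : ℕ) (hn : 0 < n) :
    ((Gamma0 n).index : ℚ) = (n : ℚ) * ∏ p ∈ n.primeFactors, (1 + 1 / (p : ℚ)) := by
  haveI : NeZero n := ⟨hn.ne'⟩
  have h1 : (Gamma0 n).index = Nat.card (Quotient (rel n)) := Nat.card_congr (quotEquiv n)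
  have h2 : Nat.card (Quotient (rel n)) * Nat.card (ZMod n)ˣ = Nat.card (Unimod n) := by
    rw [← Nat.card_prod]
    exact Nat.card_congr (orbitEquiv n)
  have h3 : Nat.card (ZMod n)ˣ = n.totient := by
    rw [Nat.card_eq_fintype_card, ZMod.card_units_eq_totient]
  have key : ((Gamma0 n).index : ℚ) * (n.totient : ℚ) =
      (n : ℚ) ^ 2 * ∏ p ∈ n.primeFactors, (1 - 1 / (p : ℚ) ^ 2) := by
    rw [← card_unimod, h1, ← h3, ← Nat.cast_mul, h2]
  have htot : (n.totient : ℚ) = (n : ℚ) * ∏ p ∈ n.primeFactors, (1 - 1 / (p : ℚ)) := by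
    rw [Nat.totient_eq_mul_prod_factors]
    congr 1
    exact Finset.prod_congr rfl (fun p _ => by rw [one_div])
  have hprod : ∏ p ∈ n.primeFactors, (1 - 1 / (p : ℚ) ^ 2) =
      (∏ p ∈ n.primeFactors, (1 - 1 / (p : ℚ))) * ∏ p ∈ n.primeFactors, (1 + 1 / (p : ℚ)) := by
    rw [← Finset.prod_mul_distrib]
    refine Finset.prod_congr rfl (fun p hp => ?_)
    have hp0 : (p : ℚ) ≠ 0 :=
      Nat.cast_ne_zero.mpr (Nat.pos_of_mem_primeFactors hp).ne'
    field_simp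
    ring
  have htotne : (n.totient : ℚ) ≠ 0 :=
    Nat.cast_ne_zero.mpr (Nat.totient_pos.mpr hn).ne'
  apply mul_right_cancel₀ htotne
  rw [key, hprod]
  rw [htot]
  ring
end

section
/- For every positive integer n, the coefficients c_d = (λ(d)/d) · (φ(gcd(d, n/d)) / gcd(d, n/d)) · ψ(n/d) satisfy ∑_{d ∣ n} c_d = n, as rational numbers. -/
/-- The Dedekind psi function `ψ(m) = m · ∏_{p prime, p ∣ m} (1 + 1/p)`, as a rational number. -/
def dedekindPsi (m : ℕ) : ℚ := (m : ℚ) * ∏ p ∈ m.primeFactors, (1 + 1 / (p : ℚ))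

/-- `λ(d) = ∏_{p prime, p ∣ d} (−p)`, with `λ(1) = 1`. -/
def lambdaProd (d : ℕ) : ℚ := ∏ p ∈ d.primeFactors, (-(p : ℚ))

def cfn (d e : ℕ) : ℚ :=
  (lambdaProd d / (d : ℚ)) * ((Nat.totient (Nat.gcd d e) : ℚ) / ((Nat.gcd d e : ℕ) : ℚ)) *
    dedekindPsi e

lemma lambdaProd_one : lambdaProd 1 = 1 := by simp [lambdaProd]
lemma dedekindPsi_one : dedekindPsi 1 = 1 := by simp [dedekindPsi]
lemma cfn_one_one : cfn 1 1 = 1 := by simp [cfn, lambdaProd_one, dedekindPsi_one]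

lemma lambdaProd_mul {a b : ℕ} (h : Nat.Coprime a b) (ha : a ≠ 0) (hb : b ≠ 0) :
    lambdaProd (a * b) = lambdaProd a * lambdaProd b := by
  rw [lambdaProd, Nat.primeFactors_mul ha hb, Finset.prod_union h.disjoint_primeFactors]
  rfl

lemma dedekindPsi_mul {a b : ℕ} (h : Nat.Coprime a b) (ha : a ≠ 0) (hb : b ≠ 0) :
    dedekindPsi (a * b) = dedekindPsi a * dedekindPsi b := by
  rw [dedekindPsi, Nat.primeFactors_mul ha hb, Finset.prod_union h.disjoint_primeFactors]
  push_cast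
  rw [dedekindPsi, dedekindPsi]
  ring

lemma gcd_mul_mul {x1 x2 y1 y2 : ℕ} (c11 : Nat.Coprime x1 y1) (c22 : Nat.Coprime x2 y2)
    (c12 : Nat.Coprime x1 y2) (c21 : Nat.Coprime x2 y1) :
    Nat.gcd (x1 * y1) (x2 * y2) = Nat.gcd x1 x2 * Nat.gcd y1 y2 := by
  rw [Nat.Coprime.gcd_mul _ c22, Nat.gcd_comm _ x2, Nat.Coprime.gcd_mul _ c11,
    Nat.gcd_comm _ y2, Nat.Coprime.gcd_mul _ c11]
  rw [Nat.Coprime.gcd_eq_one c21, Nat.Coprime.gcd_eq_one c12.symm,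
    Nat.gcd_comm x2, Nat.gcd_comm y2]
  ring

lemma cfn_mul {x1 x2 y1 y2 : ℕ} (cop : Nat.Coprime (x1 * x2) (y1 * y2))
    (hx1 : x1 ≠ 0) (hx2 : x2 ≠ 0) (hy1 : y1 ≠ 0) (hy2 : y2 ≠ 0) :
    cfn (x1 * y1) (x2 * y2) = cfn x1 x2 * cfn y1 y2 := by
  have c11 : Nat.Coprime x1 y1 :=
    Nat.Coprime.coprime_dvd_right (dvd_mul_right y1 y2)
      (Nat.Coprime.coprime_dvd_left (dvd_mul_right x1 x2) cop)
  have c12 : Nat.Coprime x1 y2 :=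
    Nat.Coprime.coprime_dvd_right (dvd_mul_left y2 y1)
      (Nat.Coprime.coprime_dvd_left (dvd_mul_right x1 x2) cop)
  have c21 : Nat.Coprime x2 y1 :=
    Nat.Coprime.coprime_dvd_right (dvd_mul_right y1 y2)
      (Nat.Coprime.coprime_dvd_left (dvd_mul_left x2 x1) cop)
  have c22 : Nat.Coprime x2 y2 :=
    Nat.Coprime.coprime_dvd_right (dvd_mul_left y2 y1)
      (Nat.Coprime.coprime_dvd_left (dvd_mul_left x2 x1) cop)
  have hg : Nat.gcd (x1 * y1) (x2 * y2) = Nat.gcd x1 x2 * Nat.gcd y1 y2 :=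
    gcd_mul_mul c11 c22 c12 c21
  have cg : Nat.Coprime (Nat.gcd x1 x2) (Nat.gcd y1 y2) :=
    Nat.Coprime.coprime_dvd_right (Nat.gcd_dvd_left _ _)
      (Nat.Coprime.coprime_dvd_left (Nat.gcd_dvd_left _ _) c11)
  rw [cfn, cfn, cfn, lambdaProd_mul c11 hx1 hy1, dedekindPsi_mul c22 hx2 hy2, hg,
    Nat.totient_mul cg]
  push_cast
  ring

open Finset Nat in
lemma sum_cfn_mul {m n : ℕ} (cop : m.Coprime n) :
    ∑ x ∈ (m * n).divisorsAntidiagonal, cfn x.1 x.2 =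
      (∑ x ∈ m.divisorsAntidiagonal, cfn x.1 x.2) *
        ∑ x ∈ n.divisorsAntidiagonal, cfn x.1 x.2 := by
  rw [sum_mul_sum, ← sum_product']
  symm
  apply sum_nbij fun ((i, j), k, l) ↦ (i * k, j * l)
  · rintro ⟨⟨a1, a2⟩, ⟨b1, b2⟩⟩ h
    simp only [mem_divisorsAntidiagonal, Ne, mem_product] at h
    rcases h with ⟨⟨rfl, ha⟩, ⟨rfl, hb⟩⟩
    simp only [mem_divisorsAntidiagonal, Nat.mul_eq_zero, Ne]
    constructor
    · ring
    rw [Nat.mul_eq_zero] at *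
    apply not_or_intro ha hb
  · simp only [Set.InjOn, mem_coe, mem_divisorsAntidiagonal, Ne, mem_product, Prod.mk_inj]
    rintro ⟨⟨a1, a2⟩, ⟨b1, b2⟩⟩ ⟨⟨rfl, ha⟩, ⟨rfl, hb⟩⟩ ⟨⟨c1, c2⟩, ⟨d1, d2⟩⟩ hcd h
    simp only [Prod.mk_inj] at h
    ext <;> dsimp only
    · trans Nat.gcd (a1 * a2) (a1 * b1)
      · rw [Nat.gcd_mul_left, cop.coprime_mul_left.coprime_mul_right_right.gcd_eq_one, mul_one]
      · rw [← hcd.1.1, ← hcd.2.1] at cop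
        rw [← hcd.1.1, h.1, Nat.gcd_mul_left,
          cop.coprime_mul_left.coprime_mul_right_right.gcd_eq_one, mul_one]
    · trans Nat.gcd (a1 * a2) (a2 * b2)
      · rw [mul_comm, Nat.gcd_mul_left, cop.coprime_mul_right.coprime_mul_left_right.gcd_eq_one,
          mul_one]
      · rw [← hcd.1.1, ← hcd.2.1] at cop
        rw [← hcd.1.1, h.2, mul_comm, Nat.gcd_mul_left,
          cop.coprime_mul_right.coprime_mul_left_right.gcd_eq_one, mul_one]
    · trans Nat.gcd (b1 * b2) (a1 * b1)
      · rw [mul_comm, Nat.gcd_mul_right,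
          cop.coprime_mul_right.coprime_mul_left_right.symm.gcd_eq_one, one_mul]
      · rw [← hcd.1.1, ← hcd.2.1] at cop
        rw [← hcd.2.1, h.1, mul_comm c1 d1, Nat.gcd_mul_left,
          cop.coprime_mul_right.coprime_mul_left_right.symm.gcd_eq_one, mul_one]
    · trans Nat.gcd (b1 * b2) (a2 * b2)
      · rw [Nat.gcd_mul_right, cop.coprime_mul_left.coprime_mul_right_right.symm.gcd_eq_one,
          one_mul]
      · rw [← hcd.1.1, ← hcd.2.1] at cop
        rw [← hcd.2.1, h.2, Nat.gcd_mul_right,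
          cop.coprime_mul_left.coprime_mul_right_right.symm.gcd_eq_one, one_mul]
  · simp only [Set.SurjOn, Set.subset_def, mem_coe, mem_divisorsAntidiagonal, Ne, mem_product,
      Set.mem_image, exists_prop, Prod.mk_inj]
    rintro ⟨b1, b2⟩ h
    dsimp at h
    use ((b1.gcd m, b2.gcd m), (b1.gcd n, b2.gcd n))
    rw [← cop.gcd_mul _, ← cop.gcd_mul _, ← h.1, Nat.gcd_mul_gcd_of_coprime_of_mul_eq_mul cop h.1,
      Nat.gcd_mul_gcd_of_coprime_of_mul_eq_mul cop.symm _]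
    · rw [Nat.mul_eq_zero, not_or] at h
      simp [h.2.1, h.2.2]
    rw [mul_comm n m, h.1]
  · simp only [mem_divisorsAntidiagonal, Ne, mem_product]
    rintro ⟨⟨a1, a2⟩, ⟨b1, b2⟩⟩ ⟨⟨rfl, ha⟩, ⟨rfl, hb⟩⟩
    dsimp only
    rw [Nat.mul_eq_zero, not_or] at ha hb
    exact (cfn_mul cop ha.1 ha.2 hb.1 hb.2).symm

lemma dedekindPsi_prime_pow {p k : ℕ} (hp : p.Prime) (hk : k ≠ 0) :
    dedekindPsi (p ^ k) = (p : ℚ) ^ k * (1 + 1 / (p : ℚ)) := by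
  rw [dedekindPsi, Nat.primeFactors_prime_pow hk hp, Finset.prod_singleton]
  push_cast; ring

lemma lambdaProd_prime_pow {p k : ℕ} (hp : p.Prime) (hk : k ≠ 0) :
    lambdaProd (p ^ k) = -(p : ℚ) := by
  rw [lambdaProd, Nat.primeFactors_prime_pow hk hp, Finset.prod_singleton]

lemma totient_div_prime_pow {p m : ℕ} (hp : p.Prime) (hm : m ≠ 0) :
    ((Nat.totient (p ^ m) : ℚ) / ((p ^ m : ℕ) : ℚ)) = 1 - 1 / (p : ℚ) := by
  obtain ⟨s, rfl⟩ := Nat.exists_eq_succ_of_ne_zero hm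
  have hq : (p : ℚ) ≠ 0 := Nat.cast_ne_zero.2 hp.pos.ne'
  rw [Nat.totient_prime_pow_succ hp]
  push_cast [Nat.cast_sub hp.one_le]
  rw [pow_succ]
  field_simp

lemma gcd_prime_pow_middle {p a k : ℕ} (hp : p.Prime) (hk : k ≠ 0) (hak : a - k ≠ 0) :
    ((Nat.totient (Nat.gcd (p ^ k) (p ^ (a - k))) : ℚ) /
      ((Nat.gcd (p ^ k) (p ^ (a - k)) : ℕ) : ℚ)) = 1 - 1 / (p : ℚ) := by
  rcases le_total k (a - k) with h | h
  · rw [Nat.gcd_eq_left (pow_dvd_pow p h)]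
    exact totient_div_prime_pow hp hk
  · rw [Nat.gcd_eq_right (pow_dvd_pow p h)]
    exact totient_div_prime_pow hp hak

lemma sum_cfn_prime_pow {p b : ℕ} (hp : p.Prime) :
    ∑ x ∈ (p ^ (b + 1)).divisorsAntidiagonal, cfn x.1 x.2 = ((p : ℚ)) ^ (b + 1) := by
  have hq : (p : ℚ) ≠ 0 := Nat.cast_ne_zero.2 hp.pos.ne'
  rw [Nat.sum_divisorsAntidiagonal (fun d e => cfn d e),
    Nat.sum_divisors_prime_pow hp, Finset.sum_range_succ, Finset.sum_range_succ']
  have hdiv : ∀ k, k ≤ b + 1 → p ^ (b + 1) / p ^ k = p ^ (b + 1 - k) := fun k hk =>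
    Nat.pow_div hk hp.pos
  have hA : cfn (p ^ 0) (p ^ (b + 1) / p ^ 0) = (p : ℚ) ^ (b + 1) + (p : ℚ) ^ b := by
    rw [hdiv 0 (by omega), pow_zero, Nat.sub_zero, cfn, Nat.gcd_one_left, lambdaProd_one,
      dedekindPsi_prime_pow hp (by omega), pow_succ]
    simp
    field_simp
  have hB : cfn (p ^ (b + 1)) (p ^ (b + 1) / p ^ (b + 1)) = -(1 / (p : ℚ) ^ b) := by
    rw [hdiv (b + 1) le_rfl, Nat.sub_self, pow_zero, cfn, Nat.gcd_one_right,
      lambdaProd_prime_pow hp (by omega), dedekindPsi_one]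
    push_cast
    rw [pow_succ]
    simp
    field_simp
  have hC : ∀ i ∈ Finset.range b, cfn (p ^ (i + 1)) (p ^ (b + 1) / p ^ (i + 1)) =
      ((p : ℚ) ^ b / (p : ℚ) ^ (2 * (i + 1))) - ((p : ℚ) ^ b / (p : ℚ) ^ (2 * i)) := by
    intro i hi
    rw [Finset.mem_range] at hi
    rw [hdiv (i + 1) (by omega), cfn, lambdaProd_prime_pow hp (by omega),
      gcd_prime_pow_middle hp (by omega) (by omega),
      dedekindPsi_prime_pow hp (by omega)]
    have h1 : b + 1 - (i + 1) = b - i := by omega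
    rw [h1, pow_sub₀ (p : ℚ) hq (by omega : i ≤ b)]
    push_cast
    field_simp
    ring
  rw [Finset.sum_congr rfl hC, Finset.sum_range_sub (fun i => (p : ℚ) ^ b / (p : ℚ) ^ (2 * i)),
    hA, hB]
  rw [mul_zero, pow_zero]
  field_simp
  ring

lemma sum_cfn (n : ℕ) : 0 < n → ∑ x ∈ n.divisorsAntidiagonal, cfn x.1 x.2 = (n : ℚ) := by
  induction n using Nat.recOnPosPrimePosCoprime with
  | prime_pow p k hpp hk =>
    intro _
    obtain ⟨b, rfl⟩ := Nat.exists_eq_succ_of_ne_zero hk.ne'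
    push_cast
    exact sum_cfn_prime_pow hpp
  | zero => intro h; exact absurd h (lt_irrefl 0)
  | one => intro _; simp [cfn_one_one]
  | coprime a b ha hb hab Pa Pb =>
    intro _
    rw [sum_cfn_mul hab, Pa (by omega), Pb (by omega)]
    push_cast
    ring


/-- The coefficients `c_d = (λ(d)/d) · (φ(gcd(d, n/d)) / gcd(d, n/d)) · ψ(n/d)` of the
genus-zero dimension formula satisfy `∑_{d ∣ n} c_d = n`. -/
theorem sum_dimension_formula_coefficients (n : ℕ) (hn : 0 < n) :
    ∑ d ∈ n.divisors,
      (lambdaProd d / (d : ℚ)) *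
        ((Nat.totient (Nat.gcd d (n / d)) : ℚ) / ((Nat.gcd d (n / d) : ℕ) : ℚ)) *
        dedekindPsi (n / d) = (n : ℚ) := by
  have h := sum_cfn n hn
  rw [Nat.sum_divisorsAntidiagonal (fun d e => cfn d e)] at h
  simpa [cfn] using h
end

section
/- Let G be a group, let V be a vector space over ℚ, and let n be a positive integer. Let φ : V → G be a homomorphism from the additive group of V to G (so φ(u+v) = φ(u)φ(v) for all u, v ∈ V; in particular the elements φ(u) pairwise commute). Let T : V → V be a ℚ-linear map with Tⁿ = id, and let g ∈ G satisfy g φ(u) g⁻¹ = φ(T u) for all u ∈ V. Then for every u ∈ V the element φ(u)·g is conjugate in G, by an element of the image of φ, to φ((1/n)·∑_{i=0}^{n−1} Tⁱ u)·g; explicitly, x = φ((1/n)·∑_{i=1}^{n−1} i·Tⁱ u) satisfies x·(φ(u) g)·x⁻¹ = φ((1/n)·∑_{i=0}^{n−1} Tⁱ u)·g. (This is the computational content of the paper's Lemma that, for an automorphism g of order n of a vertex operator algebra preserving a Cartan subalgebra 𝔥 of V₁, the automorphism e^{u₀}·g is conjugate to exp(((1/n)∑_{i=0}^{n−1} gⁱu)₀)·g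 under an inner automorphism; note u ↦ (1/n)∑_{i=0}^{n−1} Tⁱu is the projection onto the fixed-point subspace of T.) -/
/-- Let `φ : V → G` be a homomorphism from the additive group of a `ℚ`-vector space `V` to a
group `G`, let `T : V → V` be a `ℚ`-linear map with `Tⁿ = id`, and let `g ∈ G` satisfy
`g φ(u) g⁻¹ = φ(T u)`. Then `x = φ((1/n)·∑_{i=1}^{n−1} i·Tⁱ u)` conjugates `φ(u)·g` to
`φ((1/n)·∑_{i=0}^{n−1} Tⁱ u)·g`. -/
theorem inner_conj_to_fixed_point_projection
    (G : Type*) [Group G] (V : Type*) [AddCommGroup V] [Module ℚ V]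
    (n : ℕ) (hn : 0 < n)
    (φ : V → G) (hφ : ∀ u v : V, φ (u + v) = φ u * φ v)
    (T : V →ₗ[ℚ] V) (hT : T ^ n = LinearMap.id)
    (g : G) (hg : ∀ u : V, g * φ u * g⁻¹ = φ (T u))
    (u : V) :
    φ ((n : ℚ)⁻¹ • ∑ i ∈ Finset.Ico 1 n, (i : ℚ) • (T ^ i) u) * (φ u * g) *
        (φ ((n : ℚ)⁻¹ • ∑ i ∈ Finset.Ico 1 n, (i : ℚ) • (T ^ i) u))⁻¹
      = φ ((n : ℚ)⁻¹ • ∑ i ∈ Finset.range n, (T ^ i) u) * g := by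
  have hn' : (n : ℚ) ≠ 0 := Nat.cast_ne_zero.mpr hn.ne'
  -- basic homomorphism facts
  have hφ0 : φ 0 = 1 := by
    have h := hφ 0 0
    rw [add_zero] at h
    exact (left_eq_mul.mp h)
  have hφinv : ∀ v : V, φ (-v) = (φ v)⁻¹ := by
    intro v
    have h : φ (-v) * φ v = 1 := by rw [← hφ, neg_add_cancel, hφ0]
    exact eq_inv_of_mul_eq_one_left h
  have hφsub : ∀ a b : V, φ (a - b) = φ a * (φ b)⁻¹ := by
    intro a b
    rw [sub_eq_add_neg, hφ, hφinv]
  set S : V := ∑ i ∈ Finset.Ico 1 n, (i : ℚ) • (T ^ i) u with hSdef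
  set P : V := ∑ i ∈ Finset.range n, (T ^ i) u with hPdef
  set w : V := (n : ℚ)⁻¹ • S with hwdef
  -- group computation
  have h1 : g * (φ w)⁻¹ = (φ (T w))⁻¹ * g := by
    rw [← hg w]; group
  have hgrp : φ w * (φ u * g) * (φ w)⁻¹ = φ (w + u - T w) * g := by
    calc φ w * (φ u * g) * (φ w)⁻¹
        = (φ w * φ u) * (g * (φ w)⁻¹) := by group
      _ = (φ w * φ u) * ((φ (T w))⁻¹ * g) := by rw [h1]
      _ = φ (w + u - T w) * g := by rw [hφsub, hφ]; group
  -- vector identity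
  have hSrange : S = ∑ i ∈ Finset.range n, (i : ℚ) • (T ^ i) u := by
    rw [Finset.range_eq_Ico, Finset.sum_eq_sum_Ico_succ_bot hn]
    simp [hSdef]
  have hTnu : (T ^ n) u = u := by rw [hT]; rfl
  have hshift : ∑ i ∈ Finset.range n, (T ^ (i + 1)) u = P := by
    have h2 : ∑ i ∈ Finset.range (n + 1), (T ^ i) u
        = (∑ i ∈ Finset.range n, (T ^ (i + 1)) u) + (T ^ 0) u :=
      Finset.sum_range_succ' _ n
    have h3 : ∑ i ∈ Finset.range (n + 1), (T ^ i) u = P + (T ^ n) u :=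
      Finset.sum_range_succ _ n
    rw [h2] at h3
    simpa [hTnu] using h3
  have hTP : T P = P := by
    calc T P = ∑ i ∈ Finset.range n, (T ^ (i + 1)) u := by
          rw [hPdef, map_sum]
          exact Finset.sum_congr rfl fun i _ => by rw [pow_succ']; rfl
      _ = P := hshift
  -- telescoping
  have htel : ∑ i ∈ Finset.range n, (((i + 1 : ℕ) : ℚ) • (T ^ (i + 1)) u - (i : ℚ) • (T ^ i) u)
      = (n : ℚ) • (T ^ n) u - (0 : ℚ) • (T ^ 0) u :=
    Finset.sum_range_sub (fun i => (i : ℚ) • (T ^ i) u) n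
  have hterm : ∀ i : ℕ, ((i + 1 : ℕ) : ℚ) • (T ^ (i + 1)) u - (i : ℚ) • (T ^ i) u
      = (T ((i : ℚ) • (T ^ i) u) + (T ^ (i + 1)) u) - (i : ℚ) • (T ^ i) u := by
    intro i
    have : T ((i : ℚ) • (T ^ i) u) = (i : ℚ) • (T ^ (i + 1)) u := by
      rw [map_smul, pow_succ']; rfl
    rw [this]
    push_cast
    rw [add_smul, one_smul]
  have hTS : T S + P - S = (n : ℚ) • u := by
    have := htel
    simp only [hterm] at this
    rw [Finset.sum_sub_distrib, Finset.sum_add_distrib, hshift, ← map_sum, ← hSrange,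
      hTnu] at this
    simpa using this
  have hvec : w + u - T w = (n : ℚ)⁻¹ • P := by
    have hTw : T w = (n : ℚ)⁻¹ • T S := by rw [hwdef, map_smul]
    have hS' : S - T S = P - (n : ℚ) • u := by
      have := hTS
      linear_combination (norm := abel) -this
    rw [hwdef, hTw]
    have h4 : (n : ℚ)⁻¹ • S - (n : ℚ)⁻¹ • T S = (n : ℚ)⁻¹ • P - u := by
      rw [← smul_sub, hS', smul_sub, smul_smul, inv_mul_cancel₀ hn', one_smul]
    linear_combination (norm := abel) h4
  rw [hgrp, hvec]
end
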